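/- Let A be a 1QFAC over a finite alphabet Σ that recognizes a language L ⊆ Σ* with cut-point λ isolated by ε. Then for all x, y ∈ Σ*: if s_x = s_y and ‖|ψ_x⟩ − |ψ_y⟩‖ < ε, then x ≡_L y. -/

import Mathlib

noncomputable section

/-- The `n`-dimensional complex Hilbert space `ℂⁿ`. -/
abbrev QState (n : ℕ) := EuclideanSpace ℂ (Fin n)

/-- Apply a matrix to a vector of `ℂⁿ`. -/
def mApply {n : ℕ} (M : Matrix (Fin n) (Fin n) ℂ) (v : QState n) : QState n :=
  Matrix.toEuclideanLin M v

/-- Myhill–Nerode equivalence: `x ≡_L y` iff `∀ z, xz ∈ L ↔ yz ∈ L`. -/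
def mnEquiv {α : Type} (L : Set (List α)) (x y : List α) : Prop :=
  ∀ z : List α, x ++ z ∈ L ↔ y ++ z ∈ L

/-- Myhill–Nerode equivalence as a setoid. -/
def mnSetoid {α : Type} (L : Set (List α)) : Setoid (List α) where
  r := mnEquiv L
  iseqv := ⟨fun _ _ => Iff.rfl, fun h z => (h z).symm, fun h1 h2 z => (h1 z).trans (h2 z)⟩

/-- A 1QFAC: classical states `S` with initial state and transitions, an `n`-dimensional
quantum part with a unit initial vector, a unitary for each (classical state, letter),
and an orthogonal projection (accepting measurement) for each classical state. -/
structure QFAC (Alph : Type) (S : Type) (n : ℕ) where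
  s0 : S
  tr : S → Alph → S
  ψ0 : QState n
  ψ0_unit : ‖ψ0‖ = 1
  U : S → Alph → Matrix (Fin n) (Fin n) ℂ
  U_unitary : ∀ s σ, U s σ ∈ Matrix.unitaryGroup (Fin n) ℂ
  P : S → Matrix (Fin n) (Fin n) ℂ
  P_proj : ∀ s, (P s).conjTranspose = P s ∧ P s * P s = P s

namespace QFAC
variable {Alph S : Type} {n : ℕ}

/-- `s_x`: the classical state reached after reading `x`. -/
def sState (A : QFAC Alph S n) (x : List Alph) : S := x.foldl A.tr A.s0

/-- `|ψ_x⟩`: the final quantum state after reading `x`. -/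
def qState (A : QFAC Alph S n) (x : List Alph) : QState n :=
  (x.foldl (fun p σ => (A.tr p.1 σ, mApply (A.U p.1 σ) p.2)) (A.s0, A.ψ0)).2

/-- Acceptance probability `‖P_{s_x,acc}|ψ_x⟩‖²`. -/
def probAcc (A : QFAC Alph S n) (x : List Alph) : ℝ :=
  ‖mApply (A.P (A.sState x)) (A.qState x)‖ ^ 2

/-- Recognition with cut-point `lam` isolated by `ε`. -/
def Recognizes (A : QFAC Alph S n) (L : Set (List Alph)) (lam ε : ℝ) : Prop :=
  (∀ x ∈ L, lam + ε ≤ A.probAcc x) ∧ (∀ x ∉ L, A.probAcc x ≤ lam - ε)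

end QFAC

/- ### Auxiliary lemmas -/

lemma mApply_sub {n : ℕ} (M : Matrix (Fin n) (Fin n) ℂ) (v w : QState n) :
    mApply M (v - w) = mApply M v - mApply M w := map_sub _ _ _

lemma mApply_mApply {n : ℕ} (M N : Matrix (Fin n) (Fin n) ℂ) (v : QState n) :
    mApply M (mApply N v) = mApply (M * N) v := by
  simp [mApply, Matrix.toEuclideanLin_apply, Matrix.mulVec_mulVec]

lemma mApply_one {n : ℕ} (v : QState n) : mApply 1 v = v := by
  simp [mApply, Matrix.toEuclideanLin_apply]

lemma inner_mApply {n : ℕ} (M : Matrix (Fin n) (Fin n) ℂ) (v w : QState n) :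
    inner ℂ (mApply M v) w = (inner ℂ v (mApply M.conjTranspose w) : ℂ) := by
  rw [mApply, mApply, Matrix.toEuclideanLin_conjTranspose_eq_adjoint,
    LinearMap.adjoint_inner_right]

lemma norm_mApply_unitary {n : ℕ} {M : Matrix (Fin n) (Fin n) ℂ}
    (hM : M ∈ Matrix.unitaryGroup (Fin n) ℂ) (v : QState n) :
    ‖mApply M v‖ = ‖v‖ := by
  have h1 : M.conjTranspose * M = 1 := Matrix.mem_unitaryGroup_iff'.mp hM
  have key : (inner ℂ (mApply M v) (mApply M v) : ℂ) = inner ℂ v v := by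
    rw [inner_mApply, mApply_mApply, h1, mApply_one]
  rw [inner_self_eq_norm_sq_to_K, inner_self_eq_norm_sq_to_K] at key
  have h2 : ((‖mApply M v‖ ^ 2 : ℝ) : ℂ) = ((‖v‖ ^ 2 : ℝ) : ℂ) := by push_cast; exact key
  have h3 := Complex.ofReal_inj.mp h2
  nlinarith [norm_nonneg (mApply M v), norm_nonneg v]

lemma norm_mApply_proj_le {n : ℕ} {M : Matrix (Fin n) (Fin n) ℂ}
    (h1 : M.conjTranspose = M) (h2 : M * M = M) (v : QState n) :
    ‖mApply M v‖ ≤ ‖v‖ := by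
  have key : (inner ℂ (mApply M v) (mApply M v) : ℂ) = inner ℂ v (mApply M v) := by
    rw [inner_mApply, h1, mApply_mApply, h2]
  have h3 : ‖mApply M v‖ ^ 2 = Complex.re (inner ℂ v (mApply M v) : ℂ) := by
    rw [← key, inner_self_eq_norm_sq_to_K]; norm_cast
  have h4 : Complex.re (inner ℂ v (mApply M v) : ℂ) ≤ ‖v‖ * ‖mApply M v‖ := by
    calc Complex.re (inner ℂ v (mApply M v) : ℂ) ≤ ‖(inner ℂ v (mApply M v) : ℂ)‖ :=
          Complex.re_le_norm _
      _ ≤ ‖v‖ * ‖mApply M v‖ := norm_inner_le_norm _ _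
  nlinarith [norm_nonneg (mApply M v), norm_nonneg v]

namespace QFAC
variable {Alph S : Type} {n : ℕ}

lemma foldl_fst (A : QFAC Alph S n) (z : List Alph) (s : S) (v : QState n) :
    (z.foldl (fun p σ => (A.tr p.1 σ, mApply (A.U p.1 σ) p.2)) (s, v)).1 =
      z.foldl A.tr s := by
  induction z generalizing s v with
  | nil => rfl
  | cons σ t ih => simpa using ih (A.tr s σ) (mApply (A.U s σ) v)

lemma foldl_dist (A : QFAC Alph S n) (z : List Alph) (s : S) (v w : QState n) :
    ‖(z.foldl (fun p σ => (A.tr p.1 σ, mApply (A.U p.1 σ) p.2)) (s, v)).2 -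
      (z.foldl (fun p σ => (A.tr p.1 σ, mApply (A.U p.1 σ) p.2)) (s, w)).2‖ = ‖v - w‖ := by
  induction z generalizing s v w with
  | nil => rfl
  | cons σ t ih =>
      simp only [List.foldl_cons]
      rw [ih]
      rw [← mApply_sub, norm_mApply_unitary (A.U_unitary s σ)]

lemma foldl_norm (A : QFAC Alph S n) (z : List Alph) (s : S) (v : QState n) :
    ‖(z.foldl (fun p σ => (A.tr p.1 σ, mApply (A.U p.1 σ) p.2)) (s, v)).2‖ = ‖v‖ := by
  induction z generalizing s v with
  | nil => rfl
  | cons σ t ih =>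
      simp only [List.foldl_cons]
      rw [ih, norm_mApply_unitary (A.U_unitary s σ)]

lemma foldl_eq (A : QFAC Alph S n) (x : List Alph) :
    x.foldl (fun p σ => (A.tr p.1 σ, mApply (A.U p.1 σ) p.2)) (A.s0, A.ψ0) =
      (A.sState x, A.qState x) := by
  exact Prod.ext (A.foldl_fst x A.s0 A.ψ0) rfl

lemma sState_append (A : QFAC Alph S n) (x z : List Alph) :
    A.sState (x ++ z) = z.foldl A.tr (A.sState x) := by
  simp [sState, List.foldl_append]

lemma qState_append (A : QFAC Alph S n) (x z : List Alph) :
    A.qState (x ++ z) =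
      (z.foldl (fun p σ => (A.tr p.1 σ, mApply (A.U p.1 σ) p.2))
        (A.sState x, A.qState x)).2 := by
  rw [qState, List.foldl_append, foldl_eq]

lemma norm_qState (A : QFAC Alph S n) (x : List Alph) : ‖A.qState x‖ = 1 := by
  rw [qState, foldl_norm, A.ψ0_unit]

end QFAC

lemma sq_gap_lt {a b ε : ℝ} (ha0 : 0 ≤ a) (hb0 : 0 ≤ b) (ha1 : a ≤ 1) (hb1 : b ≤ 1)
    (hε : 0 < ε) (h : a - b < ε) : a ^ 2 - b ^ 2 < 2 * ε := by
  rcases le_or_gt (a + b) 0 with h1 | h1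
  · nlinarith
  · have h2 := mul_lt_mul_of_pos_right h h1
    nlinarith

/-- If a 1QFAC recognizes `L` with cut-point `lam` isolated by `ε`, and
`s_x = s_y` with `‖|ψ_x⟩ − |ψ_y⟩‖ < ε`, then `x ≡_L y`. -/
theorem stmt_6 {Alph S : Type} [Fintype Alph] {n : ℕ}
    (A : QFAC Alph S n) (L : Set (List Alph)) (lam ε : ℝ)
    (hlam : 0 < lam ∧ lam < 1) (hε : 0 < ε)
    (hrec : A.Recognizes L lam ε)
    (x y : List Alph) (hs : A.sState x = A.sState y)
    (hq : ‖A.qState x - A.qState y‖ < ε) :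
    mnEquiv L x y := by
  intro z
  -- same classical state after reading z
  have hs2 : A.sState (x ++ z) = A.sState (y ++ z) := by
    rw [A.sState_append, A.sState_append, hs]
  -- quantum states stay close
  have hd : ‖A.qState (x ++ z) - A.qState (y ++ z)‖ < ε := by
    rw [A.qState_append, A.qState_append, hs]
    rw [A.foldl_dist]
    exact hq
  set s := A.sState (x ++ z) with hsdef
  set a := ‖mApply (A.P s) (A.qState (x ++ z))‖ with hadef
  set b := ‖mApply (A.P s) (A.qState (y ++ z))‖ with hbdef
  have hpx : A.probAcc (x ++ z) = a ^ 2 := rfl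
  have hpy : A.probAcc (y ++ z) = b ^ 2 := by
    rw [QFAC.probAcc, ← hs2]
  have hP := A.P_proj s
  have ha0 : 0 ≤ a := norm_nonneg _
  have hb0 : 0 ≤ b := norm_nonneg _
  have ha1 : a ≤ 1 := by
    rw [hadef]
    calc ‖mApply (A.P s) (A.qState (x ++ z))‖ ≤ ‖A.qState (x ++ z)‖ :=
          norm_mApply_proj_le hP.1 hP.2 _
      _ = 1 := A.norm_qState _
  have hb1 : b ≤ 1 := by
    rw [hbdef]
    calc ‖mApply (A.P s) (A.qState (y ++ z))‖ ≤ ‖A.qState (y ++ z)‖ :=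
          norm_mApply_proj_le hP.1 hP.2 _
      _ = 1 := A.norm_qState _
  have habs : |a - b| < ε := by
    have h1 : |a - b| ≤ ‖mApply (A.P s) (A.qState (x ++ z)) -
        mApply (A.P s) (A.qState (y ++ z))‖ := abs_norm_sub_norm_le _ _
    rw [← mApply_sub] at h1
    have h2 : ‖mApply (A.P s) (A.qState (x ++ z) - A.qState (y ++ z))‖ ≤
        ‖A.qState (x ++ z) - A.qState (y ++ z)‖ := norm_mApply_proj_le hP.1 hP.2 _
    linarith
  have hab1 : a - b < ε := lt_of_le_of_lt (le_abs_self _) habs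
  have hab2 : b - a < ε := by
    have := habs
    rw [abs_sub_comm] at this
    exact lt_of_le_of_lt (le_abs_self _) this
  have g1 : a ^ 2 - b ^ 2 < 2 * ε := sq_gap_lt ha0 hb0 ha1 hb1 hε hab1
  have g2 : b ^ 2 - a ^ 2 < 2 * ε := sq_gap_lt hb0 ha0 hb1 ha1 hε hab2
  constructor
  · intro hxz
    by_contra hyz
    have h1 := hrec.1 _ hxz
    have h2 := hrec.2 _ hyz
    rw [hpx] at h1; rw [hpy] at h2
    linarith
  · intro hyz
    by_contra hxz
    have h1 := hrec.1 _ hyz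
    have h2 := hrec.2 _ hxz
    rw [hpy] at h1; rw [hpx] at h2
    linarith

end
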